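/- There exists a Wang tile set S that admits a tiling of the plane and such that every tiling of the plane by S is nonperiodic; that is, there exists an aperiodic Wang tile set (Berger). -/

import Mathlib

/-- A Wang tile: the colours of its (west, south, east, north) edges. -/
abbrev WangTile : Type := ℕ × ℕ × ℕ × ℕ

def WangTile.west (t : WangTile) : ℕ := t.1
def WangTile.south (t : WangTile) : ℕ := t.2.1
def WangTile.east (t : WangTile) : ℕ := t.2.2.1
def WangTile.north (t : WangTile) : ℕ := t.2.2.2

/-- The Wang matching conditions for a configuration of tiles on `ℤ × ℤ`. -/
def WangMatch (f : ℤ × ℤ → WangTile) : Prop :=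
  ∀ x y : ℤ,
    (f (x, y)).east = (f (x + 1, y)).west ∧ (f (x, y)).north = (f (x, y + 1)).south

/-- A tiling of the plane by the Wang tile set `S`. -/
def IsWangTiling (S : Finset WangTile) (f : ℤ × ℤ → WangTile) : Prop :=
  (∀ p, f p ∈ S) ∧ WangMatch f

/-- A configuration is periodic if it is invariant under some nonzero translation. -/
def WangPeriodic (f : ℤ × ℤ → WangTile) : Prop :=
  ∃ v : ℤ × ℤ, v ≠ 0 ∧ ∀ p, f (p + v) = f p

/-- A Wang tile set is aperiodic if it admits a tiling of the plane and every tiling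
of the plane by it is nonperiodic. -/
def WangAperiodic (S : Finset WangTile) : Prop :=
  (∃ f, IsWangTiling S f) ∧ ∀ f, IsWangTiling S f → ¬ WangPeriodic f

namespace Berger

def P (t : WangTile) : Prop :=
  (1 ≤ t.south ∧ t.south ≤ 2 ∧ 1 ≤ t.north ∧ t.north ≤ 2) ∧
  ((t.west ≤ 6 ∧ t.east ≤ 6 ∧ 3 * t.north + t.east = 4 * t.south + t.west) ∨
   (8 ≤ t.west ∧ t.west ≤ 12 ∧ 8 ≤ t.east ∧ t.east ≤ 12 ∧
     3 * t.north + t.east = 2 * t.south + t.west))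

instance : DecidablePred P := fun t => by unfold P; infer_instance

def S : Finset WangTile :=
  (Finset.range 13 ×ˢ Finset.range 3 ×ˢ Finset.range 13 ×ˢ Finset.range 3).filter P

lemma mem_S {t : WangTile} :
    t ∈ S ↔ (t.west < 13 ∧ t.south < 3 ∧ t.east < 13 ∧ t.north < 3) ∧ P t := by
  simp [S, Finset.mem_filter, Finset.mem_product, Finset.mem_range,
    WangTile.west, WangTile.south, WangTile.east, WangTile.north, and_assoc]

section NoPeriodic

variable {f : ℤ × ℤ → WangTile} (hS : ∀ p, f p ∈ S) (hM : WangMatch f)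

/-- the row multiplier, read off the west colour of the tile in column 0 -/
def qrow (f : ℤ × ℤ → WangTile) (y : ℤ) : ℤ := if (f (0, y)).west ≤ 6 then 4 else 2

include hS in
lemma band (x y : ℤ) : (f (x, y)).west ≤ 6 ↔ (f (x, y)).east ≤ 6 := by
  rcases (mem_S.mp (hS (x, y))).2.2 with ⟨h1, h2, _⟩ | ⟨h1, _, h3, _⟩ <;> omega

include hS hM in
lemma bandW (x y : ℤ) : ((f (x, y)).west ≤ 6 ↔ (f (0, y)).west ≤ 6) := by
  induction x using Int.induction_on with
  | zero => exact Iff.rfl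
  | succ k ih =>
      have hE := (hM k y).1
      rw [← hE]
      exact (band hS k y).symm.trans ih
  | pred k ih =>
      have hE := (hM (-(k:ℤ) - 1) y).1
      have : (-(k:ℤ) - 1 + 1) = -(k:ℤ) := by ring
      rw [this] at hE
      exact ((band hS (-(k:ℤ) - 1) y).trans (by rw [hE])).trans ih

include hS hM in
lemma roweq (x y : ℤ) :
    3 * ((f (x, y)).north : ℤ) + (f (x, y)).east
      = qrow f y * (f (x, y)).south + (f (x, y)).west := by
  rcases (mem_S.mp (hS (x, y))).2.2 with ⟨h1, h2, heq⟩ | ⟨h1, _, h3, _, heq⟩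
  · have : qrow f y = 4 := if_pos ((bandW hS hM x y).mp h1)
    rw [this]; omega
  · have : qrow f y = 2 := if_neg (fun hc => by have := (bandW hS hM x y).mpr hc; omega)
    rw [this]; omega

include hS in
lemma qrow_cases (y : ℤ) : qrow f y = 4 ∨ qrow f y = 2 := by
  unfold qrow; split <;> simp

/-- partial row sums of south labels -/
def SM (f : ℤ × ℤ → WangTile) (y : ℤ) (M : ℕ) : ℤ :=
  ∑ i ∈ Finset.range M, ((f (i, y)).south : ℤ)

include hS in
lemma SM_lb (y : ℤ) (M : ℕ) : (M : ℤ) ≤ SM f y M := by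
  have : ∀ i ∈ Finset.range M, (1:ℤ) ≤ ((f (i, y)).south : ℤ) := by
    intro i _
    have := (mem_S.mp (hS (i, y))).2.1.1
    exact_mod_cast this
  calc (M:ℤ) = ∑ _i ∈ Finset.range M, (1:ℤ) := by simp
  _ ≤ SM f y M := Finset.sum_le_sum this

include hS in
lemma SM_ub (y : ℤ) (M : ℕ) : SM f y M ≤ 2 * M := by
  have : ∀ i ∈ Finset.range M, ((f (i, y)).south : ℤ) ≤ 2 := by
    intro i _
    have := (mem_S.mp (hS (i, y))).2.1.2.1
    exact_mod_cast this
  calc SM f y M ≤ ∑ _i ∈ Finset.range M, (2:ℤ) := Finset.sum_le_sum this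
  _ = 2 * M := by simp [mul_comm]

include hS hM in
lemma sumrel (y : ℤ) (M : ℕ) :
    3 * SM f (y + 1) M + ((f (M, y)).west : ℤ)
      = qrow f y * SM f y M + ((f (0, y)).west : ℤ) := by
  have h1 : ∀ i ∈ Finset.range M,
      3 * ((f (i, y + 1)).south : ℤ)
        = qrow f y * ((f (i, y)).south : ℤ)
          + (((f (i, y)).west : ℤ) - ((f ((i:ℤ) + 1, y)).west : ℤ)) := by
    intro i _
    have hv := (hM i y).2
    have he := (hM i y).1
    have := roweq hS hM i y
    rw [hv, he] at this
    linarith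
  have h2 : 3 * SM f (y + 1) M
      = qrow f y * SM f y M + (((f ((0:ℤ), y)).west : ℤ) - ((f ((M:ℤ), y)).west : ℤ)) := by
    unfold SM
    rw [Finset.mul_sum, Finset.mul_sum]
    rw [Finset.sum_congr rfl h1, Finset.sum_add_distrib]
    congr 1
    have := Finset.sum_range_sub' (fun i : ℕ => ((f ((i:ℤ), y)).west : ℤ)) M
    simp only [Nat.cast_add, Nat.cast_one, Nat.cast_zero] at this
    exact this
  linarith

end NoPeriodic

end Berger

-- continuing
namespace Berger

section NoPeriodic

variable {f : ℤ × ℤ → WangTile} (hS : ∀ p, f p ∈ S) (hM : WangMatch f)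

include hS hM in
/-- Case 1: a horizontal period is impossible. -/
lemma caseH (a : ℤ) (ha : 0 < a) (hp : ∀ p : ℤ × ℤ, f (p + (a, 0)) = f p) : False := by
  set A : ℕ := a.toNat with hA
  have hAa : (A : ℤ) = a := Int.toNat_of_nonneg ha.le
  have hA1 : 1 ≤ A := by omega
  -- west colour repeats with period a
  have hW : ∀ y : ℤ, ((f ((A : ℤ), y)).west : ℤ) = ((f (0, y)).west : ℤ) := by
    intro y
    have := hp (0, y)
    simp only [Prod.mk_add_mk, zero_add, add_zero] at this
    rw [hAa, this]
  -- exact row-sum recursion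
  have hrel : ∀ y : ℤ, 3 * SM f (y + 1) A = qrow f y * SM f y A := by
    intro y
    have := sumrel hS hM y A
    rw [hW y] at this
    linarith
  -- 3-adic contradiction
  have key : ∀ k : ℕ, ∃ c : ℕ, (3:ℤ) ^ k * SM f (k : ℤ) A = 2 ^ c * SM f 0 A := by
    intro k
    induction k with
    | zero => exact ⟨0, by norm_num⟩
    | succ k ih =>
        obtain ⟨c, hc⟩ := ih
        have h3 := hrel (k : ℤ)
        rcases qrow_cases (f := f) hS (k : ℤ) with hq | hq
        · refine ⟨c + 2, ?_⟩
          have : ((k:ℤ) + 1) = ((k + 1 : ℕ) : ℤ) := by push_cast; ring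
          rw [this] at h3
          calc (3:ℤ) ^ (k+1) * SM f ((k+1 : ℕ) : ℤ) A
              = 3 ^ k * (3 * SM f ((k+1 : ℕ) : ℤ) A) := by ring
            _ = 3 ^ k * (4 * SM f (k : ℤ) A) := by rw [h3, hq]
            _ = 4 * (3 ^ k * SM f (k : ℤ) A) := by ring
            _ = 2 ^ (c + 2) * SM f 0 A := by rw [hc]; ring
        · refine ⟨c + 1, ?_⟩
          have : ((k:ℤ) + 1) = ((k + 1 : ℕ) : ℤ) := by push_cast; ring
          rw [this] at h3
          calc (3:ℤ) ^ (k+1) * SM f ((k+1 : ℕ) : ℤ) A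
              = 3 ^ k * (3 * SM f ((k+1 : ℕ) : ℤ) A) := by ring
            _ = 3 ^ k * (2 * SM f (k : ℤ) A) := by rw [h3, hq]
            _ = 2 * (3 ^ k * SM f (k : ℤ) A) := by ring
            _ = 2 ^ (c + 1) * SM f 0 A := by rw [hc]; ring
  -- hence 3^k divides SM f 0 A for every k
  have hpos : 0 < SM f 0 A := lt_of_lt_of_le (by exact_mod_cast hA1) (SM_lb hS 0 A)
  have hdvd : ∀ k : ℕ, (3:ℤ) ^ k ∣ SM f 0 A := by
    intro k
    obtain ⟨c, hc⟩ := key k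
    have h1 : (3:ℤ) ^ k ∣ 2 ^ c * SM f 0 A := ⟨SM f (k : ℤ) A, by linarith [hc]⟩
    have hcop : IsCoprime ((3:ℤ) ^ k) ((2:ℤ) ^ c) :=
      IsCoprime.pow (⟨1, -1, by ring⟩ : IsCoprime (3:ℤ) 2)
    exact hcop.dvd_of_dvd_mul_left h1
  -- contradiction: 3^k grows
  obtain ⟨k, hk⟩ : ∃ k : ℕ, SM f 0 A < 3 ^ k := by
    refine ⟨(SM f 0 A).toNat, ?_⟩
    have h1 : (SM f 0 A).toNat < 3 ^ (SM f 0 A).toNat := Nat.lt_pow_self (by norm_num)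
    have h2 : ((SM f 0 A).toNat : ℤ) = SM f 0 A := Int.toNat_of_nonneg hpos.le
    calc SM f 0 A = ((SM f 0 A).toNat : ℤ) := h2.symm
      _ < ((3:ℕ) ^ (SM f 0 A).toNat : ℤ) := by exact_mod_cast h1
      _ = (3:ℤ) ^ (SM f 0 A).toNat := by push_cast; ring
  exact absurd (Int.le_of_dvd hpos (hdvd k)) (by omega)

end NoPeriodic

end Berger

namespace Berger

/-- comparing sums over shifted windows -/
lemma window (G : ℕ → ℤ) (hG : ∀ j, 1 ≤ G j ∧ G j ≤ 2) (A M : ℕ) :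
    |∑ i ∈ Finset.Ico A (A + M), G i - ∑ i ∈ Finset.range M, G i| ≤ 2 * A := by
  have e1 : ∑ i ∈ Finset.Ico A (A + M), G i
      = ∑ i ∈ Finset.range (A + M), G i - ∑ i ∈ Finset.range A, G i :=
    Finset.sum_Ico_eq_sub _ (Nat.le_add_right A M)
  have e2 : ∑ i ∈ Finset.Ico M (M + A), G i
      = ∑ i ∈ Finset.range (M + A), G i - ∑ i ∈ Finset.range M, G i :=
    Finset.sum_Ico_eq_sub _ (Nat.le_add_right M A)
  have e3 : (A : ℤ) ≤ ∑ i ∈ Finset.Ico M (M + A), G i := by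
    have : ∀ i ∈ Finset.Ico M (M + A), (1:ℤ) ≤ G i := fun i _ => (hG i).1
    calc (A:ℤ) = ∑ _i ∈ Finset.Ico M (M + A), (1:ℤ) := by simp
      _ ≤ _ := Finset.sum_le_sum this
  have e4 : ∑ i ∈ Finset.Ico M (M + A), G i ≤ 2 * A := by
    have : ∀ i ∈ Finset.Ico M (M + A), G i ≤ (2:ℤ) := fun i _ => (hG i).2
    calc ∑ i ∈ Finset.Ico M (M + A), G i ≤ ∑ _i ∈ Finset.Ico M (M + A), (2:ℤ) :=
        Finset.sum_le_sum this
      _ = 2 * A := by simp [mul_comm]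
  have e5 : (A : ℤ) ≤ ∑ i ∈ Finset.range A, G i := by
    have : ∀ i ∈ Finset.range A, (1:ℤ) ≤ G i := fun i _ => (hG i).1
    calc (A:ℤ) = ∑ _i ∈ Finset.range A, (1:ℤ) := by simp
      _ ≤ _ := Finset.sum_le_sum this
  have e6 : ∑ i ∈ Finset.range A, G i ≤ 2 * A := by
    have : ∀ i ∈ Finset.range A, G i ≤ (2:ℤ) := fun i _ => (hG i).2
    calc ∑ i ∈ Finset.range A, G i ≤ ∑ _i ∈ Finset.range A, (2:ℤ) :=
        Finset.sum_le_sum this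
      _ = 2 * A := by simp [mul_comm]
  have e7 : ∑ i ∈ Finset.range (A + M), G i = ∑ i ∈ Finset.range (M + A), G i := by
    rw [Nat.add_comm]
  rw [abs_le]
  constructor <;> linarith [e1, e2, e3, e4, e5, e6, e7]

section NoPeriodic

variable {f : ℤ × ℤ → WangTile} (hS : ∀ p, f p ∈ S) (hM : WangMatch f)

include hS in
lemma west_le (x y : ℤ) : ((f (x, y)).west : ℤ) ≤ 12 ∧ 0 ≤ ((f (x, y)).west : ℤ) := by
  have := (mem_S.mp (hS (x, y))).1.1
  constructor
  · exact_mod_cast Nat.lt_succ_iff.mp this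
  · positivity

include hS in
lemma south_bnd (x y : ℤ) : (1:ℤ) ≤ ((f (x, y)).south : ℤ) ∧ ((f (x, y)).south : ℤ) ≤ 2 := by
  have h1 := (mem_S.mp (hS (x, y))).2.1.1
  have h2 := (mem_S.mp (hS (x, y))).2.1.2.1
  exact ⟨by exact_mod_cast h1, by exact_mod_cast h2⟩

set_option maxHeartbeats 1000000 in
include hS hM in
lemma caseV (a b : ℤ) (hb : 0 < b) (hp : ∀ p : ℤ × ℤ, f (p + (a, b)) = f p) : False := by
  set B : ℕ := b.toNat with hB
  have hBb : (B : ℤ) = b := Int.toNat_of_nonneg hb.le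
  have hB1 : 1 ≤ B := by omega
  have hshift : ∀ x : ℤ, f (x, (B:ℤ)) = f (x - a, 0) := by
    intro x
    have := hp (x - a, 0)
    simp only [Prod.mk_add_mk, zero_add] at this
    rw [hBb]
    rw [show x - a + a = x by ring] at this
    exact this
  set Aa : ℕ := a.natAbs with hAa
  -- the key estimate for every M
  have main : ∀ M : ℕ, (M:ℤ) ≤ 12 ^ (B+1) + 3 ^ B * (2 * (Aa : ℤ)) := by
    intro M
    -- inductive estimate
    have est : ∀ k : ℕ, ∃ c : ℕ, k ≤ c ∧
        |(3:ℤ)^k * SM f (k:ℤ) M - 2^c * SM f 0 M| ≤ 12 ^ (k+1) := by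
      intro k
      induction k with
      | zero => exact ⟨0, le_refl _, by norm_num⟩
      | succ k ih =>
          obtain ⟨c, hkc, hc⟩ := ih
          have hsr := sumrel hS hM (k:ℤ) M
          have hcast : ((k:ℤ) + 1) = ((k + 1 : ℕ) : ℤ) := by push_cast; ring
          rw [hcast] at hsr
          have hW0 := west_le hS 0 (k:ℤ)
          have hWM := west_le hS (M:ℤ) (k:ℤ)
          have h3k : (0:ℤ) < 3 ^ k := by positivity
          have h12 : (3:ℤ) ^ k ≤ 12 ^ k := pow_le_pow_left₀ (by norm_num) (by norm_num) k
          have h12p : (0:ℤ) < 12 ^ (k+1) := by positivity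
          rcases qrow_cases (f := f) hS (k : ℤ) with hq | hq
          · refine ⟨c + 2, by omega, ?_⟩
            rw [hq] at hsr
            have expand : (3:ℤ)^(k+1) * SM f ((k+1:ℕ):ℤ) M - 2^(c+2) * SM f 0 M
                = 4 * ((3:ℤ)^k * SM f (k:ℤ) M - 2^c * SM f 0 M)
                  + 3^k * (((f (0, (k:ℤ))).west : ℤ) - ((f ((M:ℤ), (k:ℤ))).west : ℤ)) := by
              have h3 : 3 * SM f ((k+1:ℕ):ℤ) M
                  = 4 * SM f ((k:ℕ):ℤ) M
                    + (((f (0, (k:ℤ))).west : ℤ) - ((f ((M:ℤ), (k:ℤ))).west : ℤ)) := by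
                linarith
              have h4 : (3:ℤ)^(k+1) * SM f ((k+1:ℕ):ℤ) M = 3^k * (3 * SM f ((k+1:ℕ):ℤ) M) := by
                ring
              rw [h4, h3]; ring
            rw [expand]
            calc |4 * ((3:ℤ)^k * SM f (k:ℤ) M - 2^c * SM f 0 M)
                  + 3^k * (((f (0, (k:ℤ))).west : ℤ) - ((f ((M:ℤ), (k:ℤ))).west : ℤ))|
                ≤ |4 * ((3:ℤ)^k * SM f (k:ℤ) M - 2^c * SM f 0 M)|
                  + |3^k * (((f (0, (k:ℤ))).west : ℤ) - ((f ((M:ℤ), (k:ℤ))).west : ℤ))| :=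
                  abs_add_le _ _
              _ ≤ 4 * 12^(k+1) + 3^k * 12 := by
                  rw [abs_mul, abs_mul]
                  have b1 : |(4:ℤ)| = 4 := by norm_num
                  have b2 : |(3:ℤ)^k| = 3^k := abs_of_pos h3k
                  have b3 : |(((f (0, (k:ℤ))).west : ℤ) - ((f ((M:ℤ), (k:ℤ))).west : ℤ))| ≤ 12 := by
                    rw [abs_le]; omega
                  rw [b1, b2]
                  have m1 := mul_le_mul_of_nonneg_left b3 h3k.le
                  linarith
              _ ≤ 12 ^ (k+1+1) := by
                  have p1 : (3:ℤ)^k * 12 ≤ 12^k * 12 :=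
                    mul_le_mul_of_nonneg_right h12 (by norm_num)
                  have p2 : (12:ℤ)^k * 12 = 12^(k+1) := by ring
                  have p3 : (12:ℤ)^(k+1+1) = 12 * 12^(k+1) := by ring
                  linarith
          · refine ⟨c + 1, by omega, ?_⟩
            rw [hq] at hsr
            have expand : (3:ℤ)^(k+1) * SM f ((k+1:ℕ):ℤ) M - 2^(c+1) * SM f 0 M
                = 2 * ((3:ℤ)^k * SM f (k:ℤ) M - 2^c * SM f 0 M)
                  + 3^k * (((f (0, (k:ℤ))).west : ℤ) - ((f ((M:ℤ), (k:ℤ))).west : ℤ)) := by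
              have h3 : 3 * SM f ((k+1:ℕ):ℤ) M
                  = 2 * SM f ((k:ℕ):ℤ) M
                    + (((f (0, (k:ℤ))).west : ℤ) - ((f ((M:ℤ), (k:ℤ))).west : ℤ)) := by
                linarith
              have h4 : (3:ℤ)^(k+1) * SM f ((k+1:ℕ):ℤ) M = 3^k * (3 * SM f ((k+1:ℕ):ℤ) M) := by
                ring
              rw [h4, h3]; ring
            rw [expand]
            calc |2 * ((3:ℤ)^k * SM f (k:ℤ) M - 2^c * SM f 0 M)
                  + 3^k * (((f (0, (k:ℤ))).west : ℤ) - ((f ((M:ℤ), (k:ℤ))).west : ℤ))|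
                ≤ |2 * ((3:ℤ)^k * SM f (k:ℤ) M - 2^c * SM f 0 M)|
                  + |3^k * (((f (0, (k:ℤ))).west : ℤ) - ((f ((M:ℤ), (k:ℤ))).west : ℤ))| :=
                  abs_add_le _ _
              _ ≤ 2 * 12^(k+1) + 3^k * 12 := by
                  rw [abs_mul, abs_mul]
                  have b2 : |(3:ℤ)^k| = 3^k := abs_of_pos h3k
                  have b3 : |(((f (0, (k:ℤ))).west : ℤ) - ((f ((M:ℤ), (k:ℤ))).west : ℤ))| ≤ 12 := by
                    rw [abs_le]; omega
                  rw [b2]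
                  have hb2 : |(2:ℤ)| = 2 := by norm_num
                  rw [hb2]
                  have m1 := mul_le_mul_of_nonneg_left b3 h3k.le
                  linarith
              _ ≤ 12 ^ (k+1+1) := by
                  have p1 : (3:ℤ)^k * 12 ≤ 12^k * 12 :=
                    mul_le_mul_of_nonneg_right h12 (by norm_num)
                  have p2 : (12:ℤ)^k * 12 = 12^(k+1) := by ring
                  have p3 : (12:ℤ)^(k+1+1) = 12 * 12^(k+1) := by ring
                  linarith
    obtain ⟨c, hcB, hest⟩ := est B
    -- window comparison
    have hwin : |SM f (B:ℤ) M - SM f 0 M| ≤ 2 * (Aa:ℤ) := by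
      rcases le_or_gt 0 a with ha | ha
      · have hAv : ((Aa:ℕ):ℤ) = a := by omega
        have hSB : SM f (B:ℤ) M = ∑ i ∈ Finset.range M, ((f ((i:ℤ) - a, 0)).south : ℤ) := by
          unfold SM
          exact Finset.sum_congr rfl fun i _ => by rw [hshift]
        have hS0 : SM f 0 M
            = ∑ i ∈ Finset.Ico Aa (Aa + M), ((f ((i:ℤ) - a, 0)).south : ℤ) := by
          rw [Finset.sum_Ico_eq_sum_range]
          simp only [Nat.add_sub_cancel_left]
          unfold SM
          refine Finset.sum_congr rfl fun i _ => ?_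
          congr 2
          push_cast [hAv]
          ring
        rw [hSB, hS0, abs_sub_comm]
        exact window _ (fun j => south_bnd hS _ _) Aa M
      · have hAv : ((Aa:ℕ):ℤ) = -a := by omega
        have hSB : SM f (B:ℤ) M
            = ∑ i ∈ Finset.Ico Aa (Aa + M), ((f ((i:ℤ), 0)).south : ℤ) := by
          rw [Finset.sum_Ico_eq_sum_range]
          simp only [Nat.add_sub_cancel_left]
          unfold SM
          refine Finset.sum_congr rfl fun i _ => ?_
          rw [hshift]
          congr 2
          push_cast [hAv]
          ring
        have hS0 : SM f 0 M = ∑ i ∈ Finset.range M, ((f ((i:ℤ), 0)).south : ℤ) := rfl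
        rw [hSB, hS0]
        exact window _ (fun j => south_bnd hS _ _) Aa M
    -- 3^B is odd, 2^c is even
    have hne : (3:ℤ)^B ≠ 2^c := by
      intro h
      have hodd : Odd ((3:ℤ)^B) := Odd.pow ⟨1, by ring⟩
      rw [h] at hodd
      have h2 : (2:ℤ) ∣ 2^c := dvd_pow_self 2 (by omega)
      obtain ⟨m, hm⟩ := h2
      obtain ⟨j, hj⟩ := hodd
      omega
    have habs1 : (1:ℤ) ≤ |(3:ℤ)^B - 2^c| := Int.one_le_abs (sub_ne_zero.mpr hne)
    have hM0 : (M:ℤ) ≤ SM f 0 M := SM_lb hS 0 M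
    have h0le : (0:ℤ) ≤ SM f 0 M := le_trans (by positivity) hM0
    have h3B : (0:ℤ) < 3 ^ B := by positivity
    calc (M:ℤ) ≤ SM f 0 M := hM0
      _ = 1 * SM f 0 M := (one_mul _).symm
      _ ≤ |(3:ℤ)^B - 2^c| * SM f 0 M := mul_le_mul_of_nonneg_right habs1 h0le
      _ = |((3:ℤ)^B - 2^c) * SM f 0 M| := by rw [abs_mul, abs_of_nonneg h0le]
      _ = |((3:ℤ)^B * SM f (B:ℤ) M - 2^c * SM f 0 M)
            + 3^B * (SM f 0 M - SM f (B:ℤ) M)| := by ring_nf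
      _ ≤ |(3:ℤ)^B * SM f (B:ℤ) M - 2^c * SM f 0 M|
            + |(3:ℤ)^B * (SM f 0 M - SM f (B:ℤ) M)| := abs_add_le _ _
      _ ≤ 12 ^ (B+1) + 3 ^ B * (2 * (Aa:ℤ)) := by
          have e1 : |(3:ℤ)^B * (SM f 0 M - SM f (B:ℤ) M)|
              = 3^B * |SM f 0 M - SM f (B:ℤ) M| := by
            rw [abs_mul, abs_of_pos h3B]
          rw [e1, abs_sub_comm] at *
          have := mul_le_mul_of_nonneg_left hwin h3B.le
          linarith
  -- choose M large enough
  set N : ℕ := 12 ^ (B+1) + 3 ^ B * (2 * Aa) + 1 with hN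
  have := main N
  rw [hN] at this
  push_cast at this
  linarith

end NoPeriodic

end Berger

namespace Berger

lemma no_periodic (f : ℤ × ℤ → WangTile) (hS : ∀ p, f p ∈ S) (hM : WangMatch f) :
    ¬ ∃ v : ℤ × ℤ, v ≠ 0 ∧ ∀ p, f (p + v) = f p := by
  rintro ⟨⟨a, b⟩, hv0, hper⟩
  have hneg : ∀ p : ℤ × ℤ, f (p + (-a, -b)) = f p := by
    intro p
    have := hper (p + (-a, -b))
    rw [show p + (-a, -b) + (a, b) = p by cases p; simp [Prod.ext_iff]] at this
    exact this.symm
  rcases lt_trichotomy b 0 with hb | hb | hb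
  · exact caseV hS hM (-a) (-b) (by omega) hneg
  · subst hb
    rcases lt_trichotomy a 0 with ha | ha | ha
    · exact caseH hS hM (-a) (by omega) (by simpa using hneg)
    · exact hv0 (by simp [ha])
    · exact caseH hS hM a ha hper
  · exact caseV hS hM a b hb hper

end Berger

namespace Berger

noncomputable section Existence

/-- `log₂(4/3)` -/
noncomputable def al : ℝ := Real.logb 2 (4/3)

lemma al_pos : 0 < al := Real.logb_pos (by norm_num) (by norm_num)

lemma al_lt_one : al < 1 := by
  have h : Real.logb 2 (4/3) < Real.logb 2 2 :=
    Real.logb_lt_logb (by norm_num) (by norm_num) (by norm_num)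
  simpa [al, Real.logb_self_eq_one] using h

lemma two_rpow_al : (2:ℝ) ^ al = 4/3 :=
  Real.rpow_logb (by norm_num) (by norm_num) (by norm_num)

/-- fractional parts along the rotation by `al` -/
noncomputable def Fr (y : ℤ) : ℝ := Int.fract ((y:ℝ) * al)

lemma Fr_nonneg (y : ℤ) : 0 ≤ Fr y := Int.fract_nonneg _
lemma Fr_lt_one (y : ℤ) : Fr y < 1 := Int.fract_lt_one _

/-- the real number encoded in row `y` -/
noncomputable def rv (y : ℤ) : ℝ := (2:ℝ) ^ (Fr y)

lemma rv_one_le (y : ℤ) : 1 ≤ rv y := by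
  have h := Real.rpow_le_rpow_of_exponent_le (by norm_num : (1:ℝ) ≤ 2) (Fr_nonneg y)
  simpa [rv, Real.rpow_zero] using h

lemma rv_lt_two (y : ℤ) : rv y < 2 := by
  have h := Real.rpow_lt_rpow_of_exponent_lt (by norm_num : (1:ℝ) < 2) (Fr_lt_one y)
  simpa [rv, Real.rpow_one] using h

lemma rv_step (y : ℤ) :
    3 * rv (y + 1) = (if Fr y + al < 1 then (4:ℝ) else 2) * rv y := by
  have hfr : Fr (y + 1) = Int.fract (Fr y + al) := by
    unfold Fr
    have h1 : ((y + 1 : ℤ):ℝ) * al = (⌊(y:ℝ) * al⌋ : ℝ) + (Int.fract ((y:ℝ) * al) + al) := by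
      have h2 := Int.floor_add_fract ((y:ℝ) * al)
      push_cast
      linarith
    rw [h1, Int.fract_intCast_add]
  by_cases h : Fr y + al < 1
  · rw [if_pos h]
    have he : Int.fract (Fr y + al) = Fr y + al :=
      Int.fract_eq_self.mpr ⟨add_nonneg (Fr_nonneg y) al_pos.le, h⟩
    simp only [rv, hfr, he]
    rw [Real.rpow_add (by norm_num : (0:ℝ) < 2), two_rpow_al]
    ring
  · rw [if_neg h]
    push_neg at h
    have h2 : Fr y + al - 1 < 1 := by have := Fr_lt_one y; have := al_lt_one; linarith
    have h0 : 0 ≤ Fr y + al - 1 := by linarith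
    have he : Int.fract (Fr y + al) = Fr y + al - 1 := by
      have hshift : Int.fract (Fr y + al) = Int.fract (Fr y + al - 1) := by
        rw [show Fr y + al - 1 = Fr y + al + ((-1 : ℤ):ℝ) by push_cast; ring,
          Int.fract_add_intCast]
      rw [hshift]
      exact Int.fract_eq_self.mpr ⟨h0, h2⟩
    simp only [rv, hfr, he]
    rw [show Fr y + al - 1 = Fr y + (al + (-1)) by ring]
    rw [Real.rpow_add (by norm_num : (0:ℝ) < 2), Real.rpow_add (by norm_num : (0:ℝ) < 2),
      two_rpow_al, Real.rpow_neg_one]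
    ring

/-- Beatty digit of `ρ` at position `x` -/
noncomputable def Dg (x : ℤ) (ρ : ℝ) : ℤ := ⌊((x:ℝ) + 1) * ρ⌋ - ⌊(x:ℝ) * ρ⌋

lemma Dg_bnd {ρ : ℝ} (h1 : 1 ≤ ρ) (h2 : ρ < 2) (x : ℤ) : 1 ≤ Dg x ρ ∧ Dg x ρ ≤ 2 := by
  have e : ((x:ℝ) + 1) * ρ = (x:ℝ) * ρ + ρ := by ring
  constructor
  · have hle : (x:ℝ) * ρ + 1 ≤ ((x:ℝ) + 1) * ρ := by rw [e]; linarith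
    have hm := Int.floor_mono hle
    have hf : ⌊(x:ℝ) * ρ + 1⌋ = ⌊(x:ℝ) * ρ⌋ + 1 := by
      rw [show (1:ℝ) = ((1:ℤ):ℝ) by norm_num, Int.floor_add_intCast]
    unfold Dg; omega
  · have hle : ((x:ℝ) + 1) * ρ ≤ (x:ℝ) * ρ + 2 := by rw [e]; linarith
    have hm := Int.floor_mono hle
    have hf : ⌊(x:ℝ) * ρ + 2⌋ = ⌊(x:ℝ) * ρ⌋ + 2 := by
      rw [show (2:ℝ) = ((2:ℤ):ℝ) by norm_num, Int.floor_add_intCast]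
    unfold Dg; omega

/-- transducer carry at position `x` -/
noncomputable def Cr (q x : ℤ) (ρ m : ℝ) : ℤ := q * ⌊(x:ℝ) * ρ⌋ - 3 * ⌊(x:ℝ) * m⌋

lemma Cr_bnd {q : ℤ} (hq : 0 < q) {ρ m : ℝ} (h3 : 3 * m = (q:ℝ) * ρ) (x : ℤ) :
    -q < Cr q x ρ m ∧ Cr q x ρ m < 3 := by
  have hqR : (0:ℝ) < (q:ℝ) := by exact_mod_cast hq
  have k1 : (q:ℝ) * ((x:ℝ) * ρ) = 3 * ((x:ℝ) * m) := by
    have : (x:ℝ) * (3 * m) = (x:ℝ) * ((q:ℝ) * ρ) := by rw [h3]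
    linarith [this]
  have f1 : (q:ℝ) * (⌊(x:ℝ) * ρ⌋ : ℝ) ≤ (q:ℝ) * ((x:ℝ) * ρ) :=
    mul_le_mul_of_nonneg_left (Int.floor_le _) hqR.le
  have f2 : (q:ℝ) * ((x:ℝ) * ρ) - (q:ℝ) < (q:ℝ) * (⌊(x:ℝ) * ρ⌋ : ℝ) := by
    have hlt := Int.sub_one_lt_floor ((x:ℝ) * ρ)
    nlinarith
  have f3 : (3:ℝ) * (⌊(x:ℝ) * m⌋ : ℝ) ≤ 3 * ((x:ℝ) * m) := by
    have := Int.floor_le ((x:ℝ) * m); linarith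
  have f4 : (3:ℝ) * ((x:ℝ) * m) - 3 < 3 * (⌊(x:ℝ) * m⌋ : ℝ) := by
    have := Int.sub_one_lt_floor ((x:ℝ) * m); linarith
  constructor
  · have hR : (-(q:ℝ)) < ((Cr q x ρ m : ℤ) : ℝ) := by
      unfold Cr; push_cast; linarith
    exact_mod_cast hR
  · have hR : ((Cr q x ρ m : ℤ) : ℝ) < 3 := by
      unfold Cr; push_cast; linarith
    exact_mod_cast hR

lemma tile_eq (q x : ℤ) (ρ m : ℝ) :
    3 * Dg x m + Cr q (x + 1) ρ m = q * Dg x ρ + Cr q x ρ m := by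
  unfold Dg Cr
  push_cast
  ring

open Classical in
/-- the explicit tiling -/
noncomputable def tl : ℤ × ℤ → WangTile := fun p =>
  if Fr p.2 + al < 1 then
    ((Cr 4 p.1 (rv p.2) (rv (p.2 + 1)) + 3).toNat,
     (Dg p.1 (rv p.2)).toNat,
     (Cr 4 (p.1 + 1) (rv p.2) (rv (p.2 + 1)) + 3).toNat,
     (Dg p.1 (rv (p.2 + 1))).toNat)
  else
    ((Cr 2 p.1 (rv p.2) (rv (p.2 + 1)) + 10).toNat,
     (Dg p.1 (rv p.2)).toNat,
     (Cr 2 (p.1 + 1) (rv p.2) (rv (p.2 + 1)) + 10).toNat,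
     (Dg p.1 (rv (p.2 + 1))).toNat)

lemma tl_mem (p : ℤ × ℤ) : tl p ∈ S := by
  classical
  obtain ⟨x, y⟩ := p
  have hs := Dg_bnd (rv_one_le y) (rv_lt_two y) x
  have hn := Dg_bnd (rv_one_le (y + 1)) (rv_lt_two (y + 1)) x
  have hstep := rv_step y
  by_cases h : Fr y + al < 1
  · rw [if_pos h] at hstep
    have h3m : 3 * rv (y + 1) = ((4:ℤ):ℝ) * rv y := by push_cast; linarith
    have hc1 := Cr_bnd (by norm_num) h3m x
    have hc2 := Cr_bnd (by norm_num) h3m (x + 1)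
    have heq := tile_eq 4 x (rv y) (rv (y + 1))
    rw [mem_S]
    simp only [tl, if_pos h, WangTile.west, WangTile.south, WangTile.east, WangTile.north, P]
    omega
  · rw [if_neg h] at hstep
    have h3m : 3 * rv (y + 1) = ((2:ℤ):ℝ) * rv y := by push_cast; linarith
    have hc1 := Cr_bnd (by norm_num) h3m x
    have hc2 := Cr_bnd (by norm_num) h3m (x + 1)
    have heq := tile_eq 2 x (rv y) (rv (y + 1))
    rw [mem_S]
    simp only [tl, if_neg h, WangTile.west, WangTile.south, WangTile.east, WangTile.north, P]
    omega

lemma tl_match : WangMatch tl := by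
  classical
  intro x y
  constructor
  · by_cases h : Fr y + al < 1 <;>
      simp [tl, WangTile.east, WangTile.west, h]
  · by_cases h : Fr y + al < 1 <;> by_cases h' : Fr (y + 1) + al < 1 <;>
      simp [tl, WangTile.north, WangTile.south, h, h']

end Existence

end Berger

/-- **Berger.** There exists an aperiodic Wang tile set: a finite set of Wang tiles that
admits a tiling of the plane, all of whose tilings of the plane are nonperiodic. -/
theorem exists_aperiodic_wang_tile_set : ∃ S : Finset WangTile, WangAperiodic S := by
  refine ⟨Berger.S, ⟨⟨Berger.tl, fun p => Berger.tl_mem p, Berger.tl_match⟩, ?_⟩⟩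
  intro f hf hper
  exact Berger.no_periodic f hf.1 hf.2 hper
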